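/- Let 𝕜 be a field of characteristic zero, n ≥ 0 an integer, Ω ∈ 𝕜[x,y,z] a homogeneous polynomial of degree 3+n with an isolated singularity, and ξ ∈ 𝕜. Let B = P_{Ω−ξ}. Then for every integer w with w < n, every nonpositive w-valuation on B is trivial (that is, every w-valuation ν on B satisfying ν(b) ≤ 0 for all nonzero b satisfies ν(b) = 0 for all nonzero b). -/

import Mathlib

open scoped TensorProduct

/-- A Poisson bracket on a commutative algebra `A` over `𝕜`: a bilinear, antisymmetric
bracket satisfying the Jacobi identity and the Leibniz rule. -/
structure PoissonStructure (𝕜 A : Type*) [CommRing 𝕜] [CommRing A] [Algebra 𝕜 A] where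
  bracket : A → A → A
  add_left : ∀ a b c : A, bracket (a + b) c = bracket a c + bracket b c
  smul_left : ∀ (r : 𝕜) (a b : A), bracket (r • a) b = r • bracket a b
  antisymm : ∀ a b : A, bracket a b = - bracket b a
  jacobi : ∀ a b c : A,
    bracket a (bracket b c) + bracket b (bracket c a) + bracket c (bracket a b) = 0
  leibniz : ∀ a b c : A, bracket a (b * c) = bracket a b * c + b * bracket a c

/-- `f` is a morphism of Poisson algebras. -/
def IsPoissonHom {𝕜 A B : Type*} [CommRing 𝕜] [CommRing A] [CommRing B]
    [Algebra 𝕜 A] [Algebra 𝕜 B]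
    (PA : PoissonStructure 𝕜 A) (PB : PoissonStructure 𝕜 B) (f : A →ₐ[𝕜] B) : Prop :=
  ∀ a b : A, f (PA.bracket a b) = PB.bracket (f a) (f b)

/-- A Poisson algebra is Dixmier if every injective Poisson endomorphism is bijective. -/
def IsDixmier (𝕜 A : Type*) [CommRing 𝕜] [CommRing A] [Algebra 𝕜 A]
    (PA : PoissonStructure 𝕜 A) : Prop :=
  ∀ f : A →ₐ[𝕜] A, IsPoissonHom PA PA f → Function.Injective f → Function.Bijective f

/-- The tensor-product Poisson bracket on `A ⊗[𝕜] B`. -/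
def IsTensorBracket {𝕜 A B : Type*} [CommRing 𝕜] [CommRing A] [CommRing B]
    [Algebra 𝕜 A] [Algebra 𝕜 B] (PA : PoissonStructure 𝕜 A) (PB : PoissonStructure 𝕜 B)
    (PT : PoissonStructure 𝕜 (A ⊗[𝕜] B)) : Prop :=
  ∀ (a a' : A) (b b' : B),
    PT.bracket (a ⊗ₜ[𝕜] b) (a' ⊗ₜ[𝕜] b') =
      PA.bracket a a' ⊗ₜ[𝕜] (b * b') + (a * a') ⊗ₜ[𝕜] PB.bracket b b'

/-- `A` is `R`-Dixmier: every injective Poisson morphism `A → A ⊗ R` has image `A ⊗ 𝕜·1`. -/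
def IsRelDixmier (𝕜 A R : Type*) [CommRing 𝕜] [CommRing A] [CommRing R]
    [Algebra 𝕜 A] [Algebra 𝕜 R] (PA : PoissonStructure 𝕜 A)
    (PT : PoissonStructure 𝕜 (A ⊗[𝕜] R)) : Prop :=
  ∀ f : A →ₐ[𝕜] A ⊗[𝕜] R, IsPoissonHom PA PT f → Function.Injective f →
    Set.range f = Set.range fun a : A => a ⊗ₜ[𝕜] (1 : R)

/-- A Poisson algebra is Poisson simple if its only Poisson ideals are `0` and the whole ring. -/
def IsPoissonSimple {𝕜 A : Type*} [CommRing 𝕜] [CommRing A] [Algebra 𝕜 A]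
    (PA : PoissonStructure 𝕜 A) : Prop :=
  ∀ I : Ideal A, (∀ x : A, ∀ y ∈ I, PA.bracket x y ∈ I) → I = ⊥ ∨ I = ⊤

open MvPolynomial in
/-- The Jacobian Poisson bracket with potential `Ω` on `𝕜[x,y,z]`. -/
noncomputable def jacBracket {𝕜 : Type*} [CommRing 𝕜]
    (Ω f g : MvPolynomial (Fin 3) 𝕜) : MvPolynomial (Fin 3) 𝕜 :=
  Matrix.det (Matrix.of
    ![![pderiv 0 f, pderiv 1 f, pderiv 2 f],
      ![pderiv 0 g, pderiv 1 g, pderiv 2 g],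
      ![pderiv 0 Ω, pderiv 1 Ω, pderiv 2 Ω]])

open MvPolynomial in
/-- `Ω` has an isolated singularity at the origin. -/
def HasIsolatedSingularity {𝕜 : Type*} [Field 𝕜] (Ω : MvPolynomial (Fin 3) 𝕜) : Prop :=
  FiniteDimensional 𝕜
    (MvPolynomial (Fin 3) 𝕜 ⧸ Ideal.span {pderiv (0 : Fin 3) Ω, pderiv 1 Ω, pderiv 2 Ω})

/-- The underlying commutative algebra of `P_{Ω-ξ} = 𝕜[x,y,z]/(Ω-ξ)`. -/
def PQuot (𝕜 : Type*) [CommRing 𝕜] (Ω : MvPolynomial (Fin 3) 𝕜) (ξ : 𝕜) : Type _ :=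
  MvPolynomial (Fin 3) 𝕜 ⧸ Ideal.span {Ω - MvPolynomial.C ξ}

noncomputable instance {𝕜 : Type*} [CommRing 𝕜] (Ω : MvPolynomial (Fin 3) 𝕜) (ξ : 𝕜) :
    CommRing (PQuot 𝕜 Ω ξ) :=
  inferInstanceAs (CommRing (MvPolynomial (Fin 3) 𝕜 ⧸ Ideal.span {Ω - MvPolynomial.C ξ}))

noncomputable instance {𝕜 : Type*} [CommRing 𝕜] (Ω : MvPolynomial (Fin 3) 𝕜) (ξ : 𝕜) :
    Algebra 𝕜 (PQuot 𝕜 Ω ξ) :=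
  inferInstanceAs (Algebra 𝕜 (MvPolynomial (Fin 3) 𝕜 ⧸ Ideal.span {Ω - MvPolynomial.C ξ}))

/-- The canonical (surjective) projection `𝕜[x,y,z] → P_{Ω-ξ}`. -/
noncomputable def PQuot.mk {𝕜 : Type*} [CommRing 𝕜] (Ω : MvPolynomial (Fin 3) 𝕜) (ξ : 𝕜)
    (f : MvPolynomial (Fin 3) 𝕜) : PQuot 𝕜 Ω ξ :=
  Ideal.Quotient.mk (Ideal.span {Ω - MvPolynomial.C ξ}) f

/-- `P` is the Poisson bracket on `P_{Ω-ξ}` induced from the Jacobian bracket on `A_Ω`. -/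
def IsInducedBracket {𝕜 : Type*} [CommRing 𝕜] (Ω : MvPolynomial (Fin 3) 𝕜) (ξ : 𝕜)
    (P : PoissonStructure 𝕜 (PQuot 𝕜 Ω ξ)) : Prop :=
  ∀ f g : MvPolynomial (Fin 3) 𝕜,
    P.bracket (PQuot.mk Ω ξ f) (PQuot.mk Ω ξ g) = PQuot.mk Ω ξ (jacBracket Ω f g)

open PiTensorProduct in
/-- The Poisson bracket on a finite tensor product `⨂[𝕜] i, A i`. -/
def IsPiTensorBracket {𝕜 : Type*} [CommRing 𝕜] {d : ℕ} {A : Fin d → Type*}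
    [∀ i, CommRing (A i)] [∀ i, Algebra 𝕜 (A i)]
    (P : ∀ i, PoissonStructure 𝕜 (A i))
    (PT : PoissonStructure 𝕜 (⨂[𝕜] i, A i)) : Prop :=
  ∀ a b : (i : Fin d) → A i,
    PT.bracket (⨂ₜ[𝕜] i, a i) (⨂ₜ[𝕜] i, b i) =
      ∑ i : Fin d,
        ⨂ₜ[𝕜] j, Function.update (fun j => a j * b j) i ((P i).bracket (a i) (b i)) j

/-- The Poisson-torus bracket associated to a matrix `Λ` on the Laurent polynomial ring
`𝕜[x₁^{±1},…,xₙ^{±1}]`, realized as the group algebra of `ℤⁿ`: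
`{x^u, x^v} = (Σ_{i,j} uᵢ λᵢⱼ vⱼ) x^{u+v}`. -/
def IsTorusBracket {𝕜 : Type*} [CommRing 𝕜] (n : ℕ) (Λ : Matrix (Fin n) (Fin n) 𝕜)
    (P : PoissonStructure 𝕜 (AddMonoidAlgebra 𝕜 (Fin n → ℤ))) : Prop :=
  ∀ u v : Fin n → ℤ,
    P.bracket (AddMonoidAlgebra.single u (1 : 𝕜)) (AddMonoidAlgebra.single v (1 : 𝕜)) =
      (∑ i, ∑ j, (u i : 𝕜) * Λ i j * (v j : 𝕜)) • AddMonoidAlgebra.single (u + v) (1 : 𝕜)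

/-- `ν : A → ℤ ∪ {∞}` is a `w`-valuation on the Poisson algebra `A`. -/
structure IsWValuation {𝕜 A : Type*} [CommRing 𝕜] [CommRing A] [Algebra 𝕜 A]
    (P : PoissonStructure 𝕜 A) (w : ℤ) (ν : A → WithTop ℤ) : Prop where
  eq_top_iff : ∀ a : A, ν a = ⊤ ↔ a = 0
  scalar : ∀ c : 𝕜, c ≠ 0 → ν (algebraMap 𝕜 A c) = 0
  map_mul : ∀ a b : A, ν (a * b) = ν a + ν b
  map_add : ∀ a b : A, min (ν a) (ν b) ≤ ν (a + b)
  map_bracket : ∀ a b : A, ν a + ν b ≤ ν (P.bracket a b) + (w : WithTop ℤ)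


section AuxLemmas

open MvPolynomial

private lemma degree_single_nat' {σ : Type*} (i : σ) (k : ℕ) :
    (Finsupp.single i k).degree = k := by
  rw [Finsupp.degree_eq_weight_one, Finsupp.weight_apply, Finsupp.sum_single_index] <;> simp

private lemma degree_sub_single' {σ : Type*} [DecidableEq σ] (d : σ →₀ ℕ) (i : σ)
    (h : 1 ≤ d i) : (d - Finsupp.single i 1).degree + 1 = d.degree := by
  have hle : Finsupp.single i 1 ≤ d := by rwa [Finsupp.single_le_iff]
  have hd : (d - Finsupp.single i 1) + Finsupp.single i 1 = d := tsub_add_cancel_of_le hle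
  have hadd : ((d - Finsupp.single i 1) + Finsupp.single i 1).degree
      = (d - Finsupp.single i 1).degree + (Finsupp.single i 1).degree := by
    simp only [Finsupp.degree_eq_weight_one, map_add]
  conv_rhs => rw [← hd]
  rw [hadd, degree_single_nat']

private lemma isHomogeneous_pderiv' {𝕜 : Type*} [CommRing 𝕜] {σ : Type*} [DecidableEq σ]
    {φ : MvPolynomial σ 𝕜} {M : ℕ} (h : φ.IsHomogeneous (M + 1)) (i : σ) :
    (pderiv i φ).IsHomogeneous M := by
  conv_lhs => rw [← support_sum_monomial_coeff φ]
  rw [map_sum]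
  apply MvPolynomial.IsHomogeneous.sum
  intro d hd
  rw [pderiv_monomial]
  by_cases hz : d i = 0
  · rw [hz, Nat.cast_zero, mul_zero, monomial_zero]
    exact isHomogeneous_zero _ _ _
  · apply isHomogeneous_monomial
    have hdeg : d.degree = M + 1 := by
      have h2 := h (mem_support_iff.mp hd)
      rw [Finsupp.degree_eq_weight_one]; exact h2
    have h3 := degree_sub_single' d i (Nat.one_le_iff_ne_zero.mpr hz)
    omega

private lemma homComp_mul_homogeneous' {𝕜 : Type*} [CommRing 𝕜] {σ : Type*}
    {h : MvPolynomial σ 𝕜} {e : ℕ} (hh : h.IsHomogeneous e)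
    (g : MvPolynomial σ 𝕜) {N : ℕ} (he : e ≤ N) :
    homogeneousComponent N (g * h) = homogeneousComponent (N - e) g * h := by
  conv_lhs => rw [← sum_homogeneousComponent g]
  rw [Finset.sum_mul, map_sum]
  have key : ∀ k : ℕ, homogeneousComponent N (homogeneousComponent k g * h)
      = if k = N - e then homogeneousComponent k g * h else 0 := by
    intro k
    have hmem : homogeneousComponent k g * h ∈ homogeneousSubmodule σ 𝕜 (k + e) :=
      (mem_homogeneousSubmodule _ _).mpr
        ((homogeneousComponent_isHomogeneous k g).mul hh)
    rw [homogeneousComponent_of_mem hmem]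
    congr 1
    simp only [eq_iff_iff]
    omega
  simp_rw [key]
  rw [Finset.sum_ite_eq' (Finset.range (g.totalDegree + 1)) (N - e)
    (fun k => homogeneousComponent k g * h)]
  split_ifs with hmem
  · rfl
  · rw [Finset.mem_range, not_lt] at hmem
    rw [homogeneousComponent_eq_zero _ _ (by omega), zero_mul]

private lemma homComp_aeval_X_pow' {𝕜 : Type*} [CommRing 𝕜] {σ : Type*}
    {q : Polynomial 𝕜} (hq : q.Monic) (i : σ) :
    homogeneousComponent q.natDegree (Polynomial.aeval (X i : MvPolynomial σ 𝕜) q)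
      = X i ^ q.natDegree := by
  rw [Polynomial.aeval_eq_sum_range, map_sum]
  have key : ∀ k ∈ Finset.range (q.natDegree + 1),
      homogeneousComponent q.natDegree (q.coeff k • (X i : MvPolynomial σ 𝕜) ^ k)
        = if k = q.natDegree then q.coeff k • (X i : MvPolynomial σ 𝕜) ^ k else 0 := by
    intro k _
    rw [map_smul, homogeneousComponent_of_mem
      ((mem_homogeneousSubmodule _ _).mpr (isHomogeneous_X_pow i k))]
    by_cases hk : k = q.natDegree
    · simp [hk]
    · simp [hk, Ne.symm hk]
  rw [Finset.sum_congr rfl key,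
    Finset.sum_ite_eq' (Finset.range (q.natDegree + 1)) q.natDegree]
  simp [Polynomial.Monic.coeff_natDegree hq]

private lemma coe_le_of_le_add' {x : WithTop ℤ} {a b : ℤ}
    (h : (a : WithTop ℤ) ≤ x + (b : ℤ)) : ((a - b : ℤ) : WithTop ℤ) ≤ x := by
  rcases x with _ | x
  · exact le_top
  · have h2 : (a : WithTop ℤ) ≤ ((x + b : ℤ) : WithTop ℤ) := by
      rw [WithTop.coe_add]; exact h
    exact WithTop.coe_le_coe.mpr (by have := WithTop.coe_le_coe.mp h2; omega)

section Val

variable {𝕜 B : Type*} [Field 𝕜] [CommRing B] [Algebra 𝕜 B]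
  {P : PoissonStructure 𝕜 B} {w : ℤ} {ν : B → WithTop ℤ}
  (hν : IsWValuation P w ν)

include hν

private lemma nu_one' : ν 1 = 0 := by
  have h := hν.scalar 1 one_ne_zero; rwa [map_one] at h

private lemma nu_smulc' {c : 𝕜} (hc : c ≠ 0) (a : B) : ν (algebraMap 𝕜 B c * a) = ν a := by
  rw [hν.map_mul, hν.scalar c hc, zero_add]

private lemma nu_neg' (a : B) : ν (-a) = ν a := by
  have h : -a = algebraMap 𝕜 B (-1) * a := by simp
  rw [h, nu_smulc' hν (by norm_num)]

private lemma nu_pow_eq' {a : B} {m : ℤ} (ha : ν a = (m : WithTop ℤ)) (k : ℕ) :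
    ν (a ^ k) = (((k : ℤ) * m : ℤ) : WithTop ℤ) := by
  induction k with
  | zero => simpa using nu_one' hν
  | succ k ih =>
      rw [pow_succ, hν.map_mul, ih, ha,
        show ((((k:ℤ) * m : ℤ) : WithTop ℤ) + (m : WithTop ℤ))
          = ((((k:ℤ) * m + m : ℤ)) : WithTop ℤ) from rfl]
      congr 1
      push_cast
      ring

private lemma nu_pow_le' {a : B} {m : ℤ} (ha : (m : WithTop ℤ) ≤ ν a) (k : ℕ) :
    (((k : ℤ) * m : ℤ) : WithTop ℤ) ≤ ν (a ^ k) := by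
  induction k with
  | zero => simpa using le_of_eq (nu_one' hν).symm
  | succ k ih =>
      rw [pow_succ, hν.map_mul]
      have h2 : ((((k:ℤ) * m : ℤ) : WithTop ℤ) + (m : WithTop ℤ)) ≤ ν (a ^ k) + ν a :=
        add_le_add ih ha
      refine le_trans (le_of_eq ?_) h2
      rw [show ((((k:ℤ) * m : ℤ) : WithTop ℤ) + (m : WithTop ℤ))
          = ((((k:ℤ) * m + m : ℤ)) : WithTop ℤ) from rfl]
      congr 1
      push_cast
      ring

private lemma nu_sum_le' {α : Type*} {s : Finset α} {g : α → B} {c : WithTop ℤ}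
    (h : ∀ i ∈ s, c ≤ ν (g i)) : c ≤ ν (∑ i ∈ s, g i) := by
  classical
  induction s using Finset.induction with
  | empty =>
      rw [Finset.sum_empty, (hν.eq_top_iff 0).mpr rfl]
      exact le_top
  | @insert a s ha ih =>
      rw [Finset.sum_insert ha]
      refine le_trans (le_min (h a (Finset.mem_insert_self a s))
        (ih fun i hi => h i (Finset.mem_insert_of_mem hi))) (hν.map_add _ _)

private lemma nu_prod_le' {α : Type*} {s : Finset α} {g : α → B} {c : α → ℤ}
    (h : ∀ i ∈ s, ((c i : ℤ) : WithTop ℤ) ≤ ν (g i)) :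
    (((∑ i ∈ s, c i : ℤ)) : WithTop ℤ) ≤ ν (∏ i ∈ s, g i) := by
  classical
  induction s using Finset.induction with
  | empty =>
      rw [Finset.prod_empty, nu_one' hν, Finset.sum_empty]
      norm_num
  | @insert a s ha ih =>
      rw [Finset.prod_insert ha, Finset.sum_insert ha, hν.map_mul]
      have h2 := add_le_add (h a (Finset.mem_insert_self a s))
        (ih fun i hi => h i (Finset.mem_insert_of_mem hi))
      refine le_trans (le_of_eq ?_) h2
      rw [show (((c a : ℤ) : WithTop ℤ) + ((∑ i ∈ s, c i : ℤ) : WithTop ℤ))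
          = (((c a + ∑ i ∈ s, c i : ℤ)) : WithTop ℤ) from rfl]

private lemma nu_apply_le' (φ : MvPolynomial (Fin 3) 𝕜 →ₐ[𝕜] B) {m : ℤ} (hm : m ≤ 0)
    (hX : ∀ i, (m : WithTop ℤ) ≤ ν (φ (MvPolynomial.X i)))
    (f : MvPolynomial (Fin 3) 𝕜) {D : ℕ} (hD : f.totalDegree ≤ D) :
    ((((D : ℤ) * m : ℤ)) : WithTop ℤ) ≤ ν (φ f) := by
  conv_rhs => rw [← support_sum_monomial_coeff f, map_sum]
  apply nu_sum_le' hν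
  intro d hd
  have hcoeff : coeff d f ≠ 0 := mem_support_iff.mp hd
  have hmono : φ (monomial d (coeff d f))
      = algebraMap 𝕜 B (coeff d f) * ∏ i ∈ d.support, φ (X i) ^ d i := by
    rw [monomial_eq, map_mul]
    congr 1
    · rw [MvPolynomial.algHom_C]
    · rw [Finsupp.prod, map_prod]
      simp [map_pow]
  rw [hmono, nu_smulc' hν hcoeff]
  have h1 : (((∑ i ∈ d.support, (d i : ℤ) * m : ℤ)) : WithTop ℤ)
      ≤ ν (∏ i ∈ d.support, φ (X i) ^ d i) :=
    nu_prod_le' hν fun i _ => nu_pow_le' hν (hX i) (d i)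
  refine le_trans (WithTop.coe_le_coe.mpr ?_) h1
  have hdeg : (∑ i ∈ d.support, (d i : ℤ)) ≤ (D : ℤ) := by
    have h2 : (d.sum fun _ e => e) ≤ f.totalDegree := le_totalDegree hd
    have h3 : (d.sum fun _ e => e) = ∑ i ∈ d.support, d i := rfl
    rw [h3] at h2
    exact_mod_cast le_trans h2 hD
  calc (D : ℤ) * m ≤ (∑ i ∈ d.support, (d i : ℤ)) * m :=
        mul_le_mul_of_nonpos_right hdeg hm
    _ = ∑ i ∈ d.support, (d i : ℤ) * m := Finset.sum_mul _ _ _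

end Val

end AuxLemmas

open MvPolynomial

/-- Lemma 2.14(1): for `B = P_{Ω-ξ}` with `Ω` an i.s. potential of degree `3+n` and `w < n`,
every nonpositive `w`-valuation on `B` is trivial. -/
theorem potential_nonpositive_wValuation_trivial
    {𝕜 : Type*} [Field 𝕜] [CharZero 𝕜] (n : ℕ)
    (Ω : MvPolynomial (Fin 3) 𝕜) (hhom : Ω.IsHomogeneous (3 + n))
    (hiso : HasIsolatedSingularity Ω) (ξ : 𝕜)
    (P : PoissonStructure 𝕜 (PQuot 𝕜 Ω ξ)) (hP : IsInducedBracket Ω ξ P)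
    (w : ℤ) (hw : w < (n : ℤ))
    (ν : PQuot 𝕜 Ω ξ → WithTop ℤ) (hν : IsWValuation P w ν)
    (hnonpos : ∀ b : PQuot 𝕜 Ω ξ, b ≠ 0 → ν b ≤ 0) :
    ∀ b : PQuot 𝕜 Ω ξ, b ≠ 0 → ν b = 0 := by
  classical
  set mkB : MvPolynomial (Fin 3) 𝕜 →ₐ[𝕜] PQuot 𝕜 Ω ξ :=
    Ideal.Quotient.mkₐ 𝕜 (Ideal.span {Ω - MvPolynomial.C ξ}) with hmkB
  have hmk : ∀ f, PQuot.mk Ω ξ f = mkB f := fun f => rfl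
  have hsurj : Function.Surjective mkB := fun b => Ideal.Quotient.mk_surjective b
  have key : ∀ i : Fin 3, (0 : WithTop ℤ) ≤ ν (mkB (X i)) := by
    by_contra hcon
    push_neg at hcon
    obtain ⟨i1, hi1⟩ := hcon
    obtain ⟨i0, -, hi0⟩ := Finset.exists_min_image Finset.univ
      (fun i => ν (mkB (X i))) ⟨i1, Finset.mem_univ i1⟩
    have hneg : ν (mkB (X i0)) < 0 := lt_of_le_of_lt (hi0 i1 (Finset.mem_univ i1)) hi1
    obtain ⟨m, hm⟩ : ∃ m : ℤ, ν (mkB (X i0)) = (m : WithTop ℤ) := by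
      rcases hx : ν (mkB (X i0)) with _ | m
      · rw [hx] at hneg
        exact absurd hneg (not_lt.mpr (le_top : (0 : WithTop ℤ) ≤ ⊤))
      · exact ⟨m, rfl⟩
    have hm0 : m < 0 := by
      rw [hm] at hneg
      exact_mod_cast hneg
    have hge : ∀ i, (m : WithTop ℤ) ≤ ν (mkB (X i)) := fun i =>
      hm ▸ hi0 i (Finset.mem_univ i)
    -- the partial derivatives are homogeneous of degree 2 + n
    have hhom' : Ω.IsHomogeneous (2 + n + 1) := by
      have h23 : 2 + n + 1 = 3 + n := by omega
      rwa [h23]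
    have hphom : ∀ j : Fin 3, (pderiv j Ω).IsHomogeneous (2 + n) :=
      fun j => isHomogeneous_pderiv' hhom' j
    -- valuation bound on the partials from the bracket axiom
    have main : ∀ (a b : Fin 3) (g : MvPolynomial (Fin 3) 𝕜),
        jacBracket Ω (X a) (X b) = g →
        ((2 * m - w : ℤ) : WithTop ℤ) ≤ ν (mkB g) := by
      intro a b g hab
      have hb : mkB g = P.bracket (mkB (X a)) (mkB (X b)) := by
        rw [← hmk, ← hmk, ← hmk, hP, hab]
      have h1 := hν.map_bracket (mkB (X a)) (mkB (X b))
      rw [← hb] at h1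
      have h2 : ((2 * m : ℤ) : WithTop ℤ) ≤ ν (mkB g) + (w : WithTop ℤ) := by
        refine le_trans ?_ (le_trans (add_le_add (hge a) (hge b)) h1)
        rw [← WithTop.coe_add]
        exact WithTop.coe_le_coe.mpr (by omega)
      exact coe_le_of_le_add' h2
    have hbr : ∀ j : Fin 3,
        ((2 * m - w : ℤ) : WithTop ℤ) ≤ ν (mkB (pderiv j Ω)) := by
      intro j
      fin_cases j
      · exact main 1 2 _ (by simp [jacBracket, Matrix.det_fin_three, pderiv_X])
      · exact main 2 0 _ (by simp [jacBracket, Matrix.det_fin_three, pderiv_X])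
      · exact main 0 1 _ (by simp [jacBracket, Matrix.det_fin_three, pderiv_X])
    -- integrality of X i0 modulo the Jacobian ideal
    haveI : Module.Finite 𝕜 (MvPolynomial (Fin 3) 𝕜 ⧸
        Ideal.span {pderiv (0 : Fin 3) Ω, pderiv 1 Ω, pderiv 2 Ω}) := hiso
    obtain ⟨q, hqm, hq0⟩ := IsIntegral.of_finite 𝕜
      (Ideal.Quotient.mk (Ideal.span {pderiv (0 : Fin 3) Ω, pderiv 1 Ω, pderiv 2 Ω}) (X i0))
    have hmem : (Polynomial.aeval (X i0 : MvPolynomial (Fin 3) 𝕜)) q ∈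
        Ideal.span {pderiv (0 : Fin 3) Ω, pderiv 1 Ω, pderiv 2 Ω} := by
      rw [← Ideal.Quotient.eq_zero_iff_mem]
      have h3 : Ideal.Quotient.mk
            (Ideal.span {pderiv (0 : Fin 3) Ω, pderiv 1 Ω, pderiv 2 Ω})
            ((Polynomial.aeval (X i0 : MvPolynomial (Fin 3) 𝕜)) q)
          = Polynomial.aeval (Ideal.Quotient.mk
              (Ideal.span {pderiv (0 : Fin 3) Ω, pderiv 1 Ω, pderiv 2 Ω}) (X i0)) q :=
        (Polynomial.aeval_algHom_apply
          (Ideal.Quotient.mkₐ 𝕜 (Ideal.span {pderiv (0 : Fin 3) Ω, pderiv 1 Ω, pderiv 2 Ω}))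
          (X i0) q).symm
      rw [h3]
      rw [Polynomial.aeval_def]
      exact hq0
    -- explicit representation
    obtain ⟨a0, r0, hr0, hE0⟩ := Submodule.mem_span_insert.mp hmem
    obtain ⟨a1, r1, hr1, hE1⟩ := Submodule.mem_span_insert.mp hr0
    obtain ⟨a2, hE2⟩ := Ideal.mem_span_singleton'.mp hr1
    have hqEq : (Polynomial.aeval (X i0 : MvPolynomial (Fin 3) 𝕜)) q
        = a0 * pderiv 0 Ω + (a1 * pderiv 1 Ω + a2 * pderiv 2 Ω) := by
      rw [hE0, hE1, ← hE2]
      simp [smul_eq_mul]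
    set N0 : ℕ := q.natDegree with hN0
    set t : MvPolynomial (Fin 3) 𝕜 := X i0 ^ (2 + n) with ht
    set N : ℕ := N0 + (2 + n) with hN
    have hbump : (Polynomial.aeval (X i0 : MvPolynomial (Fin 3) 𝕜)) q * t
        = (t * a0) * pderiv 0 Ω + ((t * a1) * pderiv 1 Ω + (t * a2) * pderiv 2 Ω) := by
      rw [hqEq]; ring
    have hcomp := congrArg (homogeneousComponent N) hbump
    have hle : 2 + n ≤ N := Nat.le_add_left _ _
    have hNsub : N - (2 + n) = N0 := by omega
    rw [homComp_mul_homogeneous' (isHomogeneous_X_pow i0 (2 + n)) _ hle, hNsub,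
      homComp_aeval_X_pow' hqm i0, map_add, map_add,
      homComp_mul_homogeneous' (hphom 0) _ hle,
      homComp_mul_homogeneous' (hphom 1) _ hle,
      homComp_mul_homogeneous' (hphom 2) _ hle, hNsub] at hcomp
    -- now hcomp : X i0 ^ N0 * t = c0 * p0 + (c1 * p1 + c2 * p2)
    have hLHS : (X i0 : MvPolynomial (Fin 3) 𝕜) ^ N0 * t = X i0 ^ N := by
      rw [ht, ← pow_add, hN]
    rw [hLHS] at hcomp
    have hfinal := congrArg (fun z => ν (mkB z)) hcomp
    simp only [map_pow, map_add, map_mul] at hfinal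
    have hLval : ν (mkB (X i0) ^ N) = (((N : ℤ) * m : ℤ) : WithTop ℤ) :=
      nu_pow_eq' hν hm N
    have hterm : ∀ j : Fin 3, ∀ a : MvPolynomial (Fin 3) 𝕜,
        (((N0 : ℤ) * m + (2 * m - w) : ℤ) : WithTop ℤ)
          ≤ ν (mkB (homogeneousComponent N0 a) * mkB (pderiv j Ω)) := by
      intro j a
      rw [hν.map_mul]
      have hdeg : (homogeneousComponent N0 a).totalDegree ≤ N0 :=
        (homogeneousComponent_isHomogeneous N0 a).totalDegree_le
      have h4 := nu_apply_le' hν mkB (le_of_lt hm0) hge (homogeneousComponent N0 a) hdeg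
      have h5 := hbr j
      refine le_trans (le_of_eq ?_) (add_le_add h4 h5)
      rw [← WithTop.coe_add]
    have hRval : (((N0 : ℤ) * m + (2 * m - w) : ℤ) : WithTop ℤ)
        ≤ ν (mkB (homogeneousComponent N0 (t * a0)) * mkB (pderiv 0 Ω)
          + (mkB (homogeneousComponent N0 (t * a1)) * mkB (pderiv 1 Ω)
            + mkB (homogeneousComponent N0 (t * a2)) * mkB (pderiv 2 Ω))) := by
      refine le_trans (le_min (hterm 0 (t * a0)) (le_trans (le_min (hterm 1 (t * a1))
        (hterm 2 (t * a2))) (hν.map_add _ _))) (hν.map_add _ _)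
    rw [← hfinal, hLval] at hRval
    have hZ : (N0 : ℤ) * m + (2 * m - w) ≤ (N : ℤ) * m := WithTop.coe_le_coe.mp hRval
    have hNcast : (N : ℤ) = (N0 : ℤ) + 2 + (n : ℤ) := by
      rw [hN]; push_cast; ring
    rw [hNcast] at hZ
    have hn0 : (0 : ℤ) ≤ (n : ℤ) := Int.natCast_nonneg n
    have hnm : (n : ℤ) * m ≤ (n : ℤ) * (-1) :=
      mul_le_mul_of_nonneg_left (by omega) hn0
    nlinarith
  -- conclusion
  intro b hb
  obtain ⟨f, rfl⟩ := hsurj b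
  have h1 := nu_apply_le' hν mkB (le_refl (0 : ℤ))
    (fun i => by simpa using key i) f (le_refl f.totalDegree)
  have h2 : (0 : WithTop ℤ) ≤ ν (mkB f) := by simpa using h1
  exact le_antisymm (hnonpos _ hb) h2
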